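/- Let m ≥ 1, let B : ℝ^m × ℝ^m → M_m(ℝ) be a symmetric bilinear map into the m×m real matrices, and set J(x) := B(x,x). Suppose there exist a set S ⊆ ℂ and a function c : ℝ^m → ℂ such that for every x ∈ ℝ^m the set of complex roots of the characteristic polynomial of J(x) equals the set c(x)·S = {c(x)·s : s ∈ S}. Then there exist a multiset M of complex numbers of cardinality m and a function c' : ℝ^m → ℂ such that for every x ∈ ℝ^m the complex root multiset of J(x) equals the multiset obtained from M by multiplying each element by c'(x). (Paper's Lemma 2.1: projectively Osserman at a point implies strongly projectively Osserman at that point.) -/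

import Mathlib

open Polynomial Finset

noncomputable section ProjOssermanAux

private lemma prod_map_mul_const (t : Multiset ℂ) (lam : ℂ) :
    (t.map (fun s => lam * s)).prod = lam ^ Multiset.card t * t.prod := by
  induction t using Multiset.induction_on with
  | empty => simp
  | cons a t ih => simp [ih]; ring

private lemma esymm_map_mul (N : Multiset ℂ) (lam : ℂ) (k : ℕ) :
    (N.map (fun s => lam * s)).esymm k = lam ^ k * N.esymm k := by
  unfold Multiset.esymm
  rw [Multiset.powersetCard_map, Multiset.map_map]
  have h1 : ((N.powersetCard k).map (fun t => ((t.map fun s => lam * s)).prod))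
      = (N.powersetCard k).map (fun t => lam ^ k * t.prod) := by
    apply Multiset.map_congr rfl
    intro t ht
    rw [prod_map_mul_const, (Multiset.mem_powersetCard.mp ht).2]
  show ((N.powersetCard k).map (Multiset.prod ∘ Multiset.map fun s => lam * s)).sum = _
  rw [show (Multiset.prod ∘ Multiset.map fun s : ℂ => lam * s)
      = (fun t => ((t.map fun s => lam * s)).prod) from rfl, h1, Multiset.sum_map_mul_left]

private lemma multiset_eq_of_esymm_eq (A B : Multiset ℂ)
    (hcard : Multiset.card A = Multiset.card B)
    (hs : ∀ j, 1 ≤ j → j ≤ Multiset.card A → A.esymm j = B.esymm j) : A = B := by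
  have hA := Polynomial.roots_multiset_prod_X_sub_C A
  have hB := Polynomial.roots_multiset_prod_X_sub_C B
  rw [← hA, ← hB]
  congr 1
  apply Polynomial.ext
  intro k
  by_cases hk : k ≤ Multiset.card A
  · rw [Multiset.prod_X_sub_C_coeff A hk, Multiset.prod_X_sub_C_coeff B (hcard ▸ hk),
      ← hcard]
    by_cases h0 : Multiset.card A - k = 0
    · rw [h0]
      simp [Multiset.esymm, Multiset.powersetCard_zero_left]
    · rw [hs _ (Nat.one_le_iff_ne_zero.mpr h0) (Nat.sub_le _ _)]
  · push_neg at hk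
    rw [Polynomial.coeff_eq_zero_of_natDegree_lt, Polynomial.coeff_eq_zero_of_natDegree_lt]
    · rw [Polynomial.natDegree_multiset_prod_X_sub_C_eq_card]; omega
    · rw [Polynomial.natDegree_multiset_prod_X_sub_C_eq_card]; omega

private lemma finset_gcd_bezout (J : Finset ℕ) :
    ∃ γ : ℕ → ℤ, (∑ j ∈ J, γ j * j) = ((J.gcd (id : ℕ → ℕ) : ℕ) : ℤ) := by
  classical
  induction J using Finset.induction_on with
  | empty => exact ⟨0, by simp⟩
  | @insert a J' ha ih =>
    obtain ⟨γ, hγ⟩ := ih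
    set g := J'.gcd id with hg
    refine ⟨fun j => if j = a then Nat.gcdA a g else Nat.gcdB a g * γ j, ?_⟩
    rw [Finset.sum_insert ha, Finset.gcd_insert]
    have h2 : ∀ j ∈ J', (if j = a then Nat.gcdA a g else Nat.gcdB a g * γ j) * (j : ℤ)
        = Nat.gcdB a g * (γ j * j) := by
      intro j hj
      have : j ≠ a := fun hja => ha (hja ▸ hj)
      rw [if_neg this]; ring
    rw [Finset.sum_congr rfl h2, ← Finset.mul_sum, hγ]
    have hb : (fun j => if j = a then Nat.gcdA a g else Nat.gcdB a g * γ j) a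
        = Nat.gcdA a g := by simp
    rw [hb]
    have hgcd : GCDMonoid.gcd (id a) (J'.gcd id) = Nat.gcd a g := rfl
    rw [hgcd, Nat.gcd_eq_gcd_ab a g]
    ring


private lemma exists_lambda_of_rel (J : Finset ℕ) (hJ : ∀ j ∈ J, 0 < j) (r : ℕ → ℂ)
    (hr0 : ∀ j ∈ J, r j ≠ 0)
    (hrel : ∀ u v : ℕ → ℕ, (∑ j ∈ J, u j * j) = (∑ j ∈ J, v j * j) →
      (∏ j ∈ J, r j ^ u j) = ∏ j ∈ J, r j ^ v j) :
    ∃ lam : ℂ, ∀ j ∈ J, lam ^ j = r j := by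
  classical
  rcases J.eq_empty_or_nonempty with rfl | hne
  · exact ⟨1, by simp⟩
  set d := J.gcd (id : ℕ → ℕ) with hd
  have hdpos : 0 < d := by
    rcases hne with ⟨j0, hj0⟩
    by_contra hc
    have h0 : d = 0 := Nat.eq_zero_of_not_pos hc
    have := Finset.gcd_eq_zero_iff.mp h0 j0 hj0
    simp only [id] at this
    exact (hJ j0 hj0).ne' this
  -- move to units
  set r' : ℕ → ℂˣ := fun j => if hj : r j ≠ 0 then Units.mk0 (r j) hj else 1 with hr'
  have hr'val : ∀ j ∈ J, (r' j : ℂ) = r j := by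
    intro j hj
    simp [hr', hr0 j hj]
  have val_prod : ∀ f : ℕ → ℂˣ, ((∏ j ∈ J, f j : ℂˣ) : ℂ) = ∏ j ∈ J, ((f j : ℂˣ) : ℂ) := by
    intro f
    rw [show ((∏ j ∈ J, f j : ℂˣ) : ℂ) = (Units.coeHom ℂ) (∏ j ∈ J, f j) from rfl, map_prod]
    rfl
  have hrelU : ∀ u v : ℕ → ℕ, (∑ j ∈ J, u j * j) = (∑ j ∈ J, v j * j) →
      (∏ j ∈ J, r' j ^ u j) = ∏ j ∈ J, r' j ^ v j := by
    intro u v huv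
    apply Units.ext
    rw [val_prod, val_prod]
    have e1 : ∀ j ∈ J, ((r' j ^ u j : ℂˣ) : ℂ) = r j ^ u j := by
      intro j hj
      rw [Units.val_pow_eq_pow_val, hr'val j hj]
    have e2 : ∀ j ∈ J, ((r' j ^ v j : ℂˣ) : ℂ) = r j ^ v j := by
      intro j hj
      rw [Units.val_pow_eq_pow_val, hr'val j hj]
    rw [Finset.prod_congr rfl e1, Finset.prod_congr rfl e2]
    exact hrel u v huv
  have hrelZ : ∀ w : ℕ → ℤ, (∑ j ∈ J, w j * j) = 0 → (∏ j ∈ J, r' j ^ w j) = 1 := by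
    intro w hw
    set u : ℕ → ℕ := fun j => (w j).toNat with hu
    set v : ℕ → ℕ := fun j => (-(w j)).toNat with hv
    have huv : ∀ j, (u j : ℤ) - v j = w j := by
      intro j; simp only [hu, hv]; omega
    have hsum : (∑ j ∈ J, u j * j) = ∑ j ∈ J, v j * j := by
      have hz : ((∑ j ∈ J, u j * j : ℕ) : ℤ) = ((∑ j ∈ J, v j * j : ℕ) : ℤ) := by
        push_cast
        have : (∑ j ∈ J, ((u j : ℤ) * j - (v j : ℤ) * j)) = ∑ j ∈ J, w j * j := by
          refine Finset.sum_congr rfl fun j _ => ?_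
          rw [← sub_mul, huv j]
        rw [Finset.sum_sub_distrib] at this
        rw [hw] at this
        linarith
      exact_mod_cast hz
    have h1 := hrelU u v hsum
    have h2 : ∀ j ∈ J, r' j ^ w j = r' j ^ (u j : ℤ) * (r' j ^ (v j : ℤ))⁻¹ := by
      intro j _
      rw [← zpow_sub, huv j]
    rw [Finset.prod_congr rfl h2, Finset.prod_mul_distrib, Finset.prod_inv_distrib]
    simp only [zpow_natCast]
    exact mul_inv_eq_one.mpr h1
  obtain ⟨γ, hγ⟩ := finset_gcd_bezout J
  rw [← hd] at hγ
  set μ : ℂˣ := ∏ j ∈ J, r' j ^ γ j with hμdef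
  have hμ : ∀ k ∈ J, μ ^ (k / d) = r' k := by
    intro k hk
    have hdk : d ∣ k := Finset.gcd_dvd hk
    set w : ℕ → ℤ := fun j => γ j * (k / d : ℕ) - (if j = k then 1 else 0) with hwdef
    have hw : (∑ j ∈ J, w j * j) = 0 := by
      simp only [hwdef, sub_mul, ite_mul, one_mul, zero_mul]
      rw [Finset.sum_sub_distrib]
      have e1 : (∑ j ∈ J, γ j * ((k / d : ℕ) : ℤ) * j) = ((k / d : ℕ) : ℤ) * ∑ j ∈ J, γ j * j := by
        rw [Finset.mul_sum]
        exact Finset.sum_congr rfl fun j _ => by ring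
      have e2 : (∑ j ∈ J, if j = k then (j : ℤ) else 0) = (k : ℤ) := by
        rw [Finset.sum_ite_eq' J k (fun j => (j : ℤ))]
        simp [hk]
      rw [e1, e2, hγ]
      have : ((d : ℤ)) * ((k / d : ℕ) : ℤ) = (k : ℤ) := by
        exact_mod_cast congrArg (Nat.cast : ℕ → ℤ) (Nat.mul_div_cancel' hdk)
      linarith
    have h1 := hrelZ w hw
    have h2 : ∀ j ∈ J, r' j ^ w j
        = (r' j ^ γ j) ^ ((k / d : ℕ)) * ((if j = k then r' j else 1))⁻¹ := by
      intro j _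
      show r' j ^ (γ j * ((k / d : ℕ) : ℤ) - (if j = k then 1 else 0)) = _
      rw [zpow_sub, ← zpow_natCast (r' j ^ γ j) (k / d), ← zpow_mul]
      congr 1
      split
      · rw [zpow_one]
      · rw [zpow_zero]
    rw [Finset.prod_congr rfl h2, Finset.prod_mul_distrib, Finset.prod_inv_distrib,
      Finset.prod_pow, Finset.prod_ite_eq' J k (fun j => r' j)] at h1
    simp only [hk, if_true] at h1
    rw [← hμdef] at h1
    exact (mul_inv_eq_one.mp h1)
  obtain ⟨lam, hlam⟩ := IsAlgClosed.exists_pow_nat_eq ((μ : ℂ)) hdpos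
  refine ⟨lam, fun k hk => ?_⟩
  have hdk : d ∣ k := Finset.gcd_dvd hk
  calc lam ^ k = (lam ^ d) ^ (k / d) := by rw [← pow_mul, Nat.mul_div_cancel' hdk]
    _ = ((μ : ℂ)) ^ (k / d) := by rw [hlam]
    _ = ((μ ^ (k / d) : ℂˣ) : ℂ) := by rw [Units.val_pow_eq_pow_val]
    _ = (r' k : ℂ) := by rw [hμ k hk]
    _ = r k := hr'val k hk


/-- weight of an exponent vector -/
private def Wt (m : ℕ) (u : ℕ → ℕ) : ℕ := ∑ j ∈ Finset.Icc 1 m, u j * j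

/-- signed elementary symmetric constants of the pattern multiset -/
private def eta (N : Multiset ℂ) (j : ℕ) : ℂ := (-1) ^ j * N.esymm j

private lemma eta_def (N : Multiset ℂ) (j : ℕ) : eta N j = (-1) ^ j * N.esymm j := rfl

/-- product of eta powers -/
private def Peta (m : ℕ) (N : Multiset ℂ) (u : ℕ → ℕ) : ℂ :=
  ∏ j ∈ Finset.Icc 1 m, (eta N j) ^ u j

/-- a quadruple (A,B,u,v) is a valid relation for pattern N -/
private def Valid (m : ℕ) (N : Multiset ℂ) (A B : ℂ) (u v : ℕ → ℕ) : Prop :=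
  ∀ lam : ℂ, A * lam ^ Wt m u * Peta m N u = B * lam ^ Wt m v * Peta m N v

/-- the monomial in the coefficient polynomials attached to exponent vector u -/
private def Qpoly (m : ℕ) (q : ℕ → MvPolynomial (Fin m) ℝ) (u : ℕ → ℕ) :
    MvPolynomial (Fin m) ℝ :=
  ∏ j ∈ Finset.Icc 1 m, (q (m - j)) ^ u j

/-- all valid relations for N hold identically as polynomial identities -/
private def Good (m : ℕ) (q : ℕ → MvPolynomial (Fin m) ℝ) (N : Multiset ℂ) : Prop :=
  ∀ A B : ℂ, ∀ u v : ℕ → ℕ, Valid m N A B u v →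
    (MvPolynomial.C A.re) * Qpoly m q u = (MvPolynomial.C B.re) * Qpoly m q v ∧
    (MvPolynomial.C A.im) * Qpoly m q u = (MvPolynomial.C B.im) * Qpoly m q v

/-- T-values: the (real) evaluations of the coefficient polynomials, as complex numbers -/
private def Tv (m : ℕ) (q : ℕ → MvPolynomial (Fin m) ℝ) (x : Fin m → ℝ) (j : ℕ) : ℂ :=
  ((MvPolynomial.eval x (q (m - j)) : ℝ) : ℂ)

private lemma prod_Tv_eq (m : ℕ) (q : ℕ → MvPolynomial (Fin m) ℝ) (x : Fin m → ℝ)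
    (u : ℕ → ℕ) :
    (∏ j ∈ Finset.Icc 1 m, Tv m q x j ^ u j)
      = ((MvPolynomial.eval x (Qpoly m q u) : ℝ) : ℂ) := by
  rw [Qpoly, map_prod, Complex.ofReal_prod]
  refine Finset.prod_congr rfl fun j _ => ?_
  rw [map_pow, Complex.ofReal_pow]
  rfl

/-- If T j = lam^j * eta j on Icc 1 m, then the T-monomial evaluates to lam^Wt * Peta. -/
private lemma prod_pow_scale (m : ℕ) (N : Multiset ℂ) (lam : ℂ) (T : ℕ → ℂ)
    (hT : ∀ j ∈ Finset.Icc 1 m, T j = lam ^ j * eta N j) (u : ℕ → ℕ) :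
    (∏ j ∈ Finset.Icc 1 m, T j ^ u j) = lam ^ Wt m u * Peta m N u := by
  rw [Wt, Peta, ← Finset.prod_pow_eq_pow_sum, ← Finset.prod_mul_distrib]
  refine Finset.prod_congr rfl fun j hj => ?_
  rw [hT j hj, mul_pow, ← pow_mul, mul_comm (u j) j]

/-- complex multiple of a real number: real part -/
private lemma re_mul_ofReal (A : ℂ) (t : ℝ) : (A * (t : ℂ)).re = A.re * t := by
  simp [Complex.mul_re]

private lemma im_mul_ofReal (A : ℂ) (t : ℝ) : (A * (t : ℂ)).im = A.im * t := by
  simp [Complex.mul_im]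

/-- On a point x whose root multiset is a lam-scaling of N, every valid relation
for N evaluates to a true real relation among coefficient polynomials. -/
private lemma valid_eval_eq (m : ℕ) (q : ℕ → MvPolynomial (Fin m) ℝ)
    (R : (Fin m → ℝ) → Multiset ℂ)
    (hesymm : ∀ x j, 1 ≤ j → j ≤ m →
      (R x).esymm j = (-1) ^ j * ((MvPolynomial.eval x (q (m - j)) : ℝ) : ℂ))
    (N : Multiset ℂ) (x : Fin m → ℝ) (lam : ℂ)
    (hx : R x = N.map (fun s => lam * s))
    (A B : ℂ) (u v : ℕ → ℕ) (hV : Valid m N A B u v) :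
    A.re * MvPolynomial.eval x (Qpoly m q u) = B.re * MvPolynomial.eval x (Qpoly m q v) ∧
    A.im * MvPolynomial.eval x (Qpoly m q u) = B.im * MvPolynomial.eval x (Qpoly m q v) := by
  have hT : ∀ j ∈ Finset.Icc 1 m, Tv m q x j = lam ^ j * eta N j := by
    intro j hj
    rw [Finset.mem_Icc] at hj
    have h1 := hesymm x j hj.1 hj.2
    rw [hx, esymm_map_mul] at h1
    have h2 : Tv m q x j = (-1) ^ j * (lam ^ j * N.esymm j) := by
      rw [Tv]
      have : ((-1 : ℂ)) ^ j * ((-1) ^ j * ((MvPolynomial.eval x (q (m - j)) : ℝ) : ℂ))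
          = (-1) ^ j * (lam ^ j * N.esymm j) := by rw [← h1]
      rwa [← mul_assoc, ← mul_pow, neg_mul_neg, one_mul, one_pow, one_mul] at this
    rw [h2]
    show (-1:ℂ) ^ j * (lam ^ j * N.esymm j) = lam ^ j * ((-1) ^ j * N.esymm j)
    ring
  have key : A * ((MvPolynomial.eval x (Qpoly m q u) : ℝ) : ℂ)
      = B * ((MvPolynomial.eval x (Qpoly m q v) : ℝ) : ℂ) := by
    rw [← prod_Tv_eq, ← prod_Tv_eq, prod_pow_scale m N lam _ hT u, prod_pow_scale m N lam _ hT v,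
      ← mul_assoc, ← mul_assoc]
    exact hV lam
  constructor
  · have := congrArg Complex.re key
    rwa [re_mul_ofReal, re_mul_ofReal] at this
  · have := congrArg Complex.im key
    rwa [im_mul_ofReal, im_mul_ofReal] at this

/-- From Good, at any point x, every valid relation holds for the T-values. -/
private lemma good_key (m : ℕ) (q : ℕ → MvPolynomial (Fin m) ℝ) (N : Multiset ℂ)
    (hG : Good m q N) (x : Fin m → ℝ) (A B : ℂ) (u v : ℕ → ℕ)
    (hV : Valid m N A B u v) :
    A * (∏ j ∈ Finset.Icc 1 m, Tv m q x j ^ u j)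
      = B * ∏ j ∈ Finset.Icc 1 m, Tv m q x j ^ v j := by
  obtain ⟨hre, him⟩ := hG A B u v hV
  have hre' := congrArg (MvPolynomial.eval x) hre
  have him' := congrArg (MvPolynomial.eval x) him
  simp only [map_mul, MvPolynomial.eval_C] at hre' him'
  rw [prod_Tv_eq, prod_Tv_eq]
  apply Complex.ext
  · rw [re_mul_ofReal, re_mul_ofReal]; exact hre'
  · rw [im_mul_ofReal, im_mul_ofReal]; exact him'


-- helpers about single-exponent vectors
private lemma prod_single_exp (f : ℕ → ℂ) (m j k : ℕ) (hj : j ∈ Finset.Icc 1 m) :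
    (∏ i ∈ Finset.Icc 1 m, f i ^ (if i = j then k else 0)) = f j ^ k := by
  rw [Finset.prod_eq_single j (fun i _ hij => by rw [if_neg hij, pow_zero])
    (fun hj' => absurd hj hj'), if_pos rfl]

private lemma prod_zero_exp (f : ℕ → ℂ) (m : ℕ) :
    (∏ i ∈ Finset.Icc 1 m, f i ^ (0 : ℕ)) = 1 := by simp

private lemma Wt_single (m j k : ℕ) (hj : j ∈ Finset.Icc 1 m) :
    Wt m (fun i => if i = j then k else 0) = k * j := by
  rw [Wt, Finset.sum_eq_single j (fun i _ hij => by rw [if_neg hij, zero_mul])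
    (fun hj' => absurd hj hj'), if_pos rfl]

private lemma Peta_single (m : ℕ) (N : Multiset ℂ) (j k : ℕ) (hj : j ∈ Finset.Icc 1 m) :
    Peta m N (fun i => if i = j then k else 0) = eta N j ^ k :=
  prod_single_exp (eta N) m j k hj

private lemma Wt_zero (m : ℕ) : Wt m (fun _ => 0) = 0 := by simp [Wt]

private lemma Peta_zero (m : ℕ) (N : Multiset ℂ) : Peta m N (fun _ => 0) = 1 := by
  simp [Peta]

private lemma good_main (m : ℕ) (q : ℕ → MvPolynomial (Fin m) ℝ)
    (R : (Fin m → ℝ) → Multiset ℂ)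
    (hcard : ∀ x, Multiset.card (R x) = m)
    (hesymm : ∀ x j, 1 ≤ j → j ≤ m →
      (R x).esymm j = (-1) ^ j * ((MvPolynomial.eval x (q (m - j)) : ℝ) : ℂ))
    (N : Multiset ℂ) (hNm : Multiset.card N = m)
    (hG : Good m q N) (x : Fin m → ℝ) :
    ∃ lam : ℂ, R x = N.map (fun s => lam * s) := by
  classical
  set T : ℕ → ℂ := Tv m q x with hTdef
  have hneg1 : ∀ j : ℕ, ((-1 : ℂ)) ^ j * (-1) ^ j = 1 := by
    intro j; rw [← mul_pow]; norm_num
  have hTesymm : ∀ j, 1 ≤ j → j ≤ m → (R x).esymm j = (-1) ^ j * T j :=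
    fun j h1 h2 => hesymm x j h1 h2
  have recon : ∀ lam : ℂ, (∀ j ∈ Finset.Icc 1 m, T j = lam ^ j * eta N j) →
      R x = N.map (fun s => lam * s) := by
    intro lam hT
    apply multiset_eq_of_esymm_eq
    · rw [hcard x, Multiset.card_map, hNm]
    · intro j hj1 hj2
      rw [hcard x] at hj2
      rw [hTesymm j hj1 hj2, esymm_map_mul, hT j (Finset.mem_Icc.mpr ⟨hj1, hj2⟩), eta_def]
      have e : (-1:ℂ) ^ j * (lam ^ j * ((-1:ℂ) ^ j * N.esymm j))
          = ((-1:ℂ) ^ j * (-1:ℂ) ^ j) * (lam ^ j * N.esymm j) := by ring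
      rw [e, hneg1 j, one_mul]
  have hT0 : ∀ j ∈ Finset.Icc 1 m, eta N j = 0 → T j = 0 := by
    intro j hj hz
    have hV : Valid m N 1 0 (fun i => if i = j then 1 else 0) (fun _ => 0) := by
      intro lam
      rw [Peta_single m N j 1 hj, Wt_single m j 1 hj, hz]
      ring
    have := good_key m q N hG x 1 0 _ _ hV
    rw [prod_single_exp _ m j 1 hj] at this
    simpa using this
  by_cases hcase : ∀ j ∈ Finset.Icc 1 m, eta N j ≠ 0 → T j ≠ 0
  · -- nondegenerate case
    set J : Finset ℕ := (Finset.Icc 1 m).filter (fun j => eta N j ≠ 0) with hJdef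
    have hJsub : J ⊆ Finset.Icc 1 m := Finset.filter_subset _ _
    have hJpos : ∀ j ∈ J, 0 < j := by
      intro j hj
      have := Finset.mem_Icc.mp (hJsub hj)
      omega
    have hJeta : ∀ j ∈ J, eta N j ≠ 0 := by
      intro j hj
      exact (Finset.mem_filter.mp hj).2
    have hJT : ∀ j ∈ J, T j ≠ 0 := by
      intro j hj
      exact hcase j (hJsub hj) (hJeta j hj)
    set r : ℕ → ℂ := fun j => T j * (eta N j)⁻¹ with hrdef
    have hr0 : ∀ j ∈ J, r j ≠ 0 := by
      intro j hj
      exact mul_ne_zero (hJT j hj) (inv_ne_zero (hJeta j hj))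
    have hrel : ∀ u v : ℕ → ℕ, (∑ j ∈ J, u j * j) = (∑ j ∈ J, v j * j) →
        (∏ j ∈ J, r j ^ u j) = ∏ j ∈ J, r j ^ v j := by
      intro u v hsum
      set u' : ℕ → ℕ := fun i => if i ∈ J then u i else 0 with hu'
      set v' : ℕ → ℕ := fun i => if i ∈ J then v i else 0 with hv'
      have hWu : Wt m u' = ∑ j ∈ J, u j * j := by
        rw [Wt]
        rw [← Finset.sum_subset hJsub (fun i _ hni => by
          simp only [hu', if_neg hni, zero_mul])]
        exact Finset.sum_congr rfl fun i hi => by simp only [hu', if_pos hi]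
      have hWv : Wt m v' = ∑ j ∈ J, v j * j := by
        rw [Wt]
        rw [← Finset.sum_subset hJsub (fun i _ hni => by
          simp only [hv', if_neg hni, zero_mul])]
        exact Finset.sum_congr rfl fun i hi => by simp only [hv', if_pos hi]
      have hPu : Peta m N u' = ∏ j ∈ J, eta N j ^ u j := by
        rw [Peta]
        rw [← Finset.prod_subset hJsub (fun i _ hni => by
          simp only [hu', if_neg hni, pow_zero])]
        exact Finset.prod_congr rfl fun i hi => by simp only [hu', if_pos hi]
      have hPv : Peta m N v' = ∏ j ∈ J, eta N j ^ v j := by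
        rw [Peta]
        rw [← Finset.prod_subset hJsub (fun i _ hni => by
          simp only [hv', if_neg hni, pow_zero])]
        exact Finset.prod_congr rfl fun i hi => by simp only [hv', if_pos hi]
      have hV : Valid m N (Peta m N v') (Peta m N u') u' v' := by
        intro lam
        rw [hWu, hWv, hsum]
        ring
      have key := good_key m q N hG x _ _ _ _ hV
      have hTu : (∏ j ∈ Finset.Icc 1 m, Tv m q x j ^ u' j) = ∏ j ∈ J, T j ^ u j := by
        rw [← Finset.prod_subset hJsub (fun i _ hni => by
          simp only [hu', if_neg hni, pow_zero])]
        exact Finset.prod_congr rfl fun i hi => by simp only [hu', if_pos hi, hTdef]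
      have hTv : (∏ j ∈ Finset.Icc 1 m, Tv m q x j ^ v' j) = ∏ j ∈ J, T j ^ v j := by
        rw [← Finset.prod_subset hJsub (fun i _ hni => by
          simp only [hv', if_neg hni, pow_zero])]
        exact Finset.prod_congr rfl fun i hi => by simp only [hv', if_pos hi, hTdef]
      rw [hTu, hTv, hPu, hPv] at key
      -- key : (∏ η^v) * (∏ T^u) = (∏ η^u) * (∏ T^v)
      have hEu : (∏ j ∈ J, eta N j ^ u j) ≠ 0 :=
        Finset.prod_ne_zero_iff.mpr fun j hj => pow_ne_zero _ (hJeta j hj)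
      have hEv : (∏ j ∈ J, eta N j ^ v j) ≠ 0 :=
        Finset.prod_ne_zero_iff.mpr fun j hj => pow_ne_zero _ (hJeta j hj)
      have hru : (∏ j ∈ J, r j ^ u j)
          = (∏ j ∈ J, T j ^ u j) * (∏ j ∈ J, eta N j ^ u j)⁻¹ := by
        rw [← Finset.prod_inv_distrib, ← Finset.prod_mul_distrib]
        exact Finset.prod_congr rfl fun j _ => by rw [hrdef, mul_pow, inv_pow]
      have hrv : (∏ j ∈ J, r j ^ v j)
          = (∏ j ∈ J, T j ^ v j) * (∏ j ∈ J, eta N j ^ v j)⁻¹ := by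
        rw [← Finset.prod_inv_distrib, ← Finset.prod_mul_distrib]
        exact Finset.prod_congr rfl fun j _ => by rw [hrdef, mul_pow, inv_pow]
      rw [hru, hrv]
      field_simp
      linear_combination key
    obtain ⟨lam, hlam⟩ := exists_lambda_of_rel J hJpos r hr0 hrel
    refine ⟨lam, recon lam ?_⟩
    intro j hj
    by_cases hjJ : j ∈ J
    · have h1 := hlam j hjJ
      have h2 : r j * eta N j = T j := inv_mul_cancel_right₀ (hJeta j hjJ) (T j)
      rw [← h2, ← h1]
    · have hz : eta N j = 0 := by
        by_contra hnz
        exact hjJ (Finset.mem_filter.mpr ⟨hj, hnz⟩)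
      rw [hz, mul_zero, hT0 j hj hz]
  · -- degenerate case: some eta-nonzero T vanishes, so all T vanish, lam = 0
    push_neg at hcase
    obtain ⟨j1, hj1, hj1eta, hj1T⟩ := hcase
    have hj1pos : 0 < j1 := by
      have := Finset.mem_Icc.mp hj1
      omega
    have hallT : ∀ k ∈ Finset.Icc 1 m, T k = 0 := by
      intro k hk
      by_cases hz : eta N k = 0
      · exact hT0 k hk hz
      · have hkpos : 0 < k := by
          have := Finset.mem_Icc.mp hk
          omega
        have hV : Valid m N (eta N k ^ j1) (eta N j1 ^ k)
            (fun i => if i = j1 then k else 0) (fun i => if i = k then j1 else 0) := by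
          intro lam
          rw [Peta_single m N j1 k hj1, Wt_single m j1 k hj1,
            Peta_single m N k j1 hk, Wt_single m k j1 hk]
          rw [mul_comm k j1]
          ring
        have key := good_key m q N hG x _ _ _ _ hV
        rw [prod_single_exp _ m j1 k hj1, prod_single_exp _ m k j1 hk] at key
        have : Tv m q x j1 = 0 := hj1T
        rw [this, zero_pow (Nat.pos_iff_ne_zero.mp hkpos), mul_zero] at key
        have hk2 : Tv m q x k ^ j1 = 0 := by
          have hη : eta N j1 ^ k ≠ 0 := pow_ne_zero _ hj1eta
          exact (mul_eq_zero.mp key.symm).resolve_left hη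
        have : Tv m q x k = 0 := pow_eq_zero_iff (Nat.pos_iff_ne_zero.mp hj1pos) |>.mp hk2
        exact this
    refine ⟨0, recon 0 ?_⟩
    intro j hj
    have hjpos : 0 < j := by
      have := Finset.mem_Icc.mp hj
      omega
    rw [zero_pow (Nat.pos_iff_ne_zero.mp hjpos), zero_mul]
    exact hallT j hj


private lemma main_aux (m : ℕ) (R : (Fin m → ℝ) → Multiset ℂ)
    (q : ℕ → MvPolynomial (Fin m) ℝ)
    (hcard : ∀ x, Multiset.card (R x) = m)
    (hesymm : ∀ x j, 1 ≤ j → j ≤ m →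
      (R x).esymm j = (-1) ^ j * ((MvPolynomial.eval x (q (m - j)) : ℝ) : ℂ))
    (Patterns : Finset (Sym ℂ m))
    (hcover : ∀ x, ∃ N ∈ Patterns, ∃ lam : ℂ,
      R x = Multiset.map (fun s => lam * s) ↑N) :
    ∃ M : Multiset ℂ, Multiset.card M = m ∧
      ∃ c' : (Fin m → ℝ) → ℂ, ∀ x, R x = M.map (fun s => c' x * s) := by
  classical
  by_cases hgood : ∃ N ∈ Patterns, Good m q ↑N
  · obtain ⟨N, _, hG⟩ := hgood
    have hmain := fun x => good_main m q R hcard hesymm ↑N (Sym.card_coe) hG x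
    choose c' hc' using hmain
    exact ⟨↑N, Sym.card_coe, c', hc'⟩
  · exfalso
    push_neg at hgood
    have hbad : ∀ N ∈ Patterns, ∃ f : MvPolynomial (Fin m) ℝ, f ≠ 0 ∧
        ∀ x lam, R x = Multiset.map (fun s => lam * s) ↑N →
          MvPolynomial.eval x f = 0 := by
      intro N hN
      have hng := hgood N hN
      unfold Good at hng
      push_neg at hng
      obtain ⟨A, B, u, v, hV, hne⟩ := hng
      by_cases hre : MvPolynomial.C A.re * Qpoly m q u = MvPolynomial.C B.re * Qpoly m q v
      case neg =>
        refine ⟨MvPolynomial.C A.re * Qpoly m q u - MvPolynomial.C B.re * Qpoly m q v,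
          sub_ne_zero.mpr hre, ?_⟩
        intro x lam hx
        have := (valid_eval_eq m q R hesymm ↑N x lam hx A B u v hV).1
        simp only [map_sub, map_mul, MvPolynomial.eval_C]
        rw [this]
        ring
      case pos =>
        refine ⟨MvPolynomial.C A.im * Qpoly m q u - MvPolynomial.C B.im * Qpoly m q v,
          sub_ne_zero.mpr (hne hre), ?_⟩
        intro x lam hx
        have := (valid_eval_eq m q R hesymm ↑N x lam hx A B u v hV).2
        simp only [map_sub, map_mul, MvPolynomial.eval_C]
        rw [this]
        ring
    choose! g hg0 hg1 using hbad
    have hFne : (∏ N ∈ Patterns, g N) ≠ 0 := Finset.prod_ne_zero_iff.mpr hg0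
    have hex : ∃ x : Fin m → ℝ, MvPolynomial.eval x (∏ N ∈ Patterns, g N) ≠ 0 := by
      by_contra hc
      push_neg at hc
      apply hFne
      apply MvPolynomial.funext
      intro x
      rw [map_zero]
      exact hc x
    obtain ⟨x, hx⟩ := hex
    obtain ⟨N1, hN1, lam1, hcov⟩ := hcover x
    apply hx
    rw [map_prod]
    exact Finset.prod_eq_zero hN1 (hg1 N1 hN1 x lam1 hcov)


end ProjOssermanAux

/-- Paper's Lemma 2.1: projectively Osserman at a point implies strongly
projectively Osserman at that point, in pointwise algebraic form. -/
theorem projectively_osserman_implies_strongly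
    (m : ℕ) (hm : 1 ≤ m)
    (B : (Fin m → ℝ) →ₗ[ℝ] (Fin m → ℝ) →ₗ[ℝ] Matrix (Fin m) (Fin m) ℝ)
    (hBsym : ∀ x y, B x y = B y x)
    (S : Set ℂ) (c : (Fin m → ℝ) → ℂ)
    (h : ∀ x : Fin m → ℝ,
      {z : ℂ | Polynomial.aeval z (Matrix.charpoly (B x x)) = 0} =
        (fun s => c x * s) '' S) :
    ∃ M : Multiset ℂ, Multiset.card M = m ∧
      ∃ c' : (Fin m → ℝ) → ℂ, ∀ x : Fin m → ℝ,
        (Polynomial.map (algebraMap ℝ ℂ) (Matrix.charpoly (B x x))).roots =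
          M.map (fun s => c' x * s) := by
  classical
  -- the root multiset family
  set R : (Fin m → ℝ) → Multiset ℂ :=
    fun x => (Polynomial.map (algebraMap ℝ ℂ) (Matrix.charpoly (B x x))).roots with hRdef
  -- basic facts on the mapped charpoly
  have hmonic : ∀ x : Fin m → ℝ,
      ((Matrix.charpoly (B x x)).map (algebraMap ℝ ℂ)).Monic :=
    fun x => (Matrix.charpoly_monic _).map _
  have hdeg : ∀ x : Fin m → ℝ,
      ((Matrix.charpoly (B x x)).map (algebraMap ℝ ℂ)).natDegree = m := by
    intro x
    rw [(Matrix.charpoly_monic _).natDegree_map]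
    simp [Matrix.charpoly_natDegree_eq_dim]
  have hsplit : ∀ x : Fin m → ℝ,
      ((Matrix.charpoly (B x x)).map (algebraMap ℝ ℂ)).Splits :=
    fun x => IsAlgClosed.splits _
  have hcard : ∀ x, Multiset.card (R x) = m := by
    intro x
    rw [hRdef]
    have := (Polynomial.splits_iff_card_roots).mp (hsplit x)
    rw [hdeg x] at this
    exact this
  have hne : ∀ x : Fin m → ℝ, (Matrix.charpoly (B x x)).map (algebraMap ℝ ℂ) ≠ 0 :=
    fun x => (hmonic x).ne_zero
  -- membership description of roots
  have hmem : ∀ (x : Fin m → ℝ) (z : ℂ),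
      z ∈ R x ↔ (Polynomial.aeval z (Matrix.charpoly (B x x)) = 0) := by
    intro x z
    rw [hRdef]
    rw [Polynomial.mem_roots (hne x), Polynomial.IsRoot.def, Polynomial.eval_map,
      ← Polynomial.aeval_def]
  -- the coefficient polynomials q
  set e : Fin m → (Fin m → ℝ) := fun k => Pi.single k 1 with he
  set P : Matrix (Fin m) (Fin m) (MvPolynomial (Fin m) ℝ) :=
    Matrix.of (fun i j => ∑ k : Fin m, ∑ l : Fin m,
      (MvPolynomial.X k * MvPolynomial.X l) * MvPolynomial.C ((B (e k) (e l)) i j)) with hP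
  have hx0 : ∀ y : Fin m → ℝ, y = ∑ k : Fin m, y k • e k := by
    intro y
    funext i
    rw [Finset.sum_apply]
    simp [he, Pi.single_apply, mul_ite, mul_one, mul_zero]
  have hBgen : ∀ a b : Fin m → ℝ,
      B (∑ k : Fin m, a k • e k) (∑ l : Fin m, b l • e l)
        = ∑ k : Fin m, ∑ l : Fin m, (a k * b l) • B (e k) (e l) := by
    intro a b
    calc (B (∑ k : Fin m, a k • e k)) (∑ l : Fin m, b l • e l)
        = ∑ l : Fin m, (B (∑ k : Fin m, a k • e k)) (b l • e l) := map_sum _ _ _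
      _ = ∑ l : Fin m, ∑ k : Fin m, (a k * b l) • (B (e k)) (e l) := by
          refine Finset.sum_congr rfl fun l _ => ?_
          have h1 : B (∑ k : Fin m, a k • e k) = ∑ k : Fin m, a k • B (e k) := by
            rw [map_sum]
            exact Finset.sum_congr rfl fun k _ => by rw [map_smul]
          rw [map_smul, h1, LinearMap.sum_apply, Finset.smul_sum]
          refine Finset.sum_congr rfl fun k _ => ?_
          rw [LinearMap.smul_apply, smul_smul, mul_comm (a k) (b l)]
      _ = ∑ k : Fin m, ∑ l : Fin m, (a k * b l) • (B (e k)) (e l) := Finset.sum_comm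
  have hBxx : ∀ x : Fin m → ℝ,
      B x x = ∑ k : Fin m, ∑ l : Fin m, (x k * x l) • B (e k) (e l) := by
    intro x
    conv_lhs => rw [hx0 x]
    exact hBgen x x
  have hPmap : ∀ x : Fin m → ℝ, P.map (MvPolynomial.eval x) = B x x := by
    intro x
    funext i j
    rw [Matrix.map_apply, hP, Matrix.of_apply, map_sum, hBxx x, Matrix.sum_apply]
    refine Finset.sum_congr rfl fun k _ => ?_
    rw [map_sum, Matrix.sum_apply]
    refine Finset.sum_congr rfl fun l _ => ?_
    simp only [map_mul, MvPolynomial.eval_X, MvPolynomial.eval_C, Matrix.smul_apply,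
      smul_eq_mul]
  set q : ℕ → MvPolynomial (Fin m) ℝ := fun k => (Matrix.charpoly P).coeff k with hq
  have hqeval : ∀ (x : Fin m → ℝ) (k : ℕ),
      MvPolynomial.eval x (q k) = (Matrix.charpoly (B x x)).coeff k := by
    intro x k
    rw [hq, ← hPmap x, Matrix.charpoly_map, Polynomial.coeff_map]
  -- the esymm formula
  have hesymm : ∀ (x : Fin m → ℝ) (j : ℕ), 1 ≤ j → j ≤ m →
      (R x).esymm j = (-1) ^ j * ((MvPolynomial.eval x (q (m - j)) : ℝ) : ℂ) := by
    intro x j hj1 hj2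
    have hprod : (Matrix.charpoly (B x x)).map (algebraMap ℝ ℂ)
        = ((R x).map fun a => Polynomial.X - Polynomial.C a).prod :=
      (hsplit x).eq_prod_roots_of_monic (hmonic x)
    have hcoeff : ((Matrix.charpoly (B x x)).map (algebraMap ℝ ℂ)).coeff (m - j)
        = (-1) ^ j * (R x).esymm j := by
      conv_lhs => rw [hprod]
      rw [Multiset.prod_X_sub_C_coeff (R x) (by rw [hcard x]; omega)]
      rw [hcard x]
      have hmj : m - (m - j) = j := by omega
      rw [hmj]
    have hc2 : ((Matrix.charpoly (B x x)).map (algebraMap ℝ ℂ)).coeff (m - j)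
        = ((MvPolynomial.eval x (q (m - j)) : ℝ) : ℂ) := by
      rw [Polynomial.coeff_map, hqeval x (m - j)]
      rfl
    rw [hc2] at hcoeff
    rw [hcoeff, ← mul_assoc, ← mul_pow]
    norm_num
  -- Case analysis: all roots zero everywhere, or a nonzero root somewhere
  by_cases hall : ∀ (x : Fin m → ℝ), ∀ z ∈ R x, z = 0
  · refine ⟨Multiset.replicate m 0, by simp, fun _ => 0, fun x => ?_⟩
    rw [Multiset.map_replicate]
    simp only [mul_zero]
    exact Multiset.eq_replicate.mpr ⟨hcard x, hall x⟩
  · push_neg at hall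
    obtain ⟨x₀, z₀, hz₀mem, hz₀ne⟩ := hall
    have hz₀S : z₀ ∈ (fun s => c x₀ * s) '' S := by
      rw [← h x₀]
      exact (hmem x₀ z₀).mp hz₀mem
    obtain ⟨s₀, hs₀S, hs₀⟩ := hz₀S
    have hc₀ : c x₀ ≠ 0 := by
      intro h0
      simp only [h0, zero_mul] at hs₀
      exact hz₀ne hs₀.symm
    -- S is finite
    have hSfin : S.Finite := by
      have himg : ((fun s => c x₀ * s) '' S).Finite := by
        rw [← h x₀]
        apply Set.Finite.subset (R x₀).toFinset.finite_toSet
        intro z hz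
        have hzR : z ∈ R x₀ := (hmem x₀ z).mpr hz
        simpa using hzR
      exact Set.Finite.of_finite_image himg
        (fun a _ b _ hab => mul_left_cancel₀ hc₀ hab)
    set Sfin : Finset ℂ := hSfin.toFinset with hSfindef
    set Patterns : Finset (Sym ℂ m) := Sfin.sym m with hPat
    have hcover : ∀ x, ∃ N ∈ Patterns, ∃ lam : ℂ,
        R x = Multiset.map (fun s => lam * s) ↑N := by
      intro x
      by_cases hx : ∀ z ∈ R x, z = 0
      · refine ⟨Sym.replicate m s₀,
          Finset.replicate_mem_sym (by rw [hSfindef, Set.Finite.mem_toFinset]; exact hs₀S) m,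
          0, ?_⟩
        rw [Sym.coe_replicate, Multiset.map_replicate]
        simp only [zero_mul]
        exact Multiset.eq_replicate.mpr ⟨hcard x, hx⟩
      · push_neg at hx
        obtain ⟨z₁, hz₁mem, hz₁ne⟩ := hx
        have hz₁S : z₁ ∈ (fun s => c x * s) '' S := by
          rw [← h x]; exact (hmem x z₁).mp hz₁mem
        obtain ⟨s₁, hs₁S, hs₁⟩ := hz₁S
        have hcx : c x ≠ 0 := by
          intro h0
          simp only [h0, zero_mul] at hs₁
          exact hz₁ne hs₁.symm
        refine ⟨Sym.mk ((R x).map (fun z => (c x)⁻¹ * z))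
          (by rw [Multiset.card_map, hcard x]), ?_, c x, ?_⟩
        · rw [Finset.mem_sym_iff]
          intro a ha
          rw [Sym.mem_mk] at ha
          obtain ⟨z, hz, rfl⟩ := Multiset.mem_map.mp ha
          have : z ∈ (fun s => c x * s) '' S := by
            rw [← h x]; exact (hmem x z).mp hz
          obtain ⟨s, hsS, rfl⟩ := this
          rw [hSfindef, Set.Finite.mem_toFinset]
          rwa [inv_mul_cancel_left₀ hcx]
        · show R x = Multiset.map (fun s => c x * s) ((R x).map fun z => (c x)⁻¹ * z)
          rw [Multiset.map_map]
          rw [show ((fun s => c x * s) ∘ fun z => (c x)⁻¹ * z) = fun z => c x * ((c x)⁻¹ * z)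
            from rfl]
          conv_lhs => rw [← Multiset.map_id (R x)]
          refine Multiset.map_congr rfl fun z _ => ?_
          rw [mul_inv_cancel_left₀ hcx]
          rfl
    exact main_aux m R q hcard hesymm Patterns hcover
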